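/- Every w-almost greedy basis of a real Banach space is w-semi-greedy: there exists a constant K̄ (which can be taken as 1 + 3K + 16K³D with K the quasi-greedy and D the w-democracy constant) such that the Chebyshev greedy approximant satisfies ||x − Ḡ_m(x)|| ≤ K̄ σ^w_{w(Λ_m)}(x) for all x and m. -/

import Mathlib

open Finset Filter

section Defs

variable {X : Type*} [NormedAddCommGroup X] [NormedSpace ℝ X]

/-- `wsum w A` is the `w`-measure of the finite set `A`. -/
def wsum (w : ℕ → ℝ) (A : Finset ℕ) : ℝ := ∑ i ∈ A, w i

/-- `e` is a normalized (Schauder) basis with biorthogonal functionals `E`. -/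
def NormalizedBasis (e : ℕ → X) (E : ℕ → X →L[ℝ] ℝ) : Prop :=
  (∀ n, ‖e n‖ = 1) ∧ (∀ n m, E n (e m) = if n = m then (1:ℝ) else 0) ∧
  ∀ x : X, Filter.Tendsto (fun N => ∑ n ∈ Finset.range N, E n x • e n)
    Filter.atTop (nhds x)

/-- `Λ` is a greedy set for `x`: every coefficient inside dominates every one outside. -/
def GreedySet (E : ℕ → X →L[ℝ] ℝ) (x : X) (Λ : Finset ℕ) : Prop :=
  ∀ n ∈ Λ, ∀ k, k ∉ Λ → |E k x| ≤ |E n x|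

/-- quasi-greedy with constant `K`. -/
def QuasiGreedy (e : ℕ → X) (E : ℕ → X →L[ℝ] ℝ) (K : ℝ) : Prop :=
  ∀ (x : X) (Λ : Finset ℕ), GreedySet E x Λ → ‖∑ n ∈ Λ, E n x • e n‖ ≤ K * ‖x‖

/-- `w`-almost greedy with constant `K`. -/
def WAlmostGreedy (w : ℕ → ℝ) (e : ℕ → X) (E : ℕ → X →L[ℝ] ℝ) (K : ℝ) : Prop :=
  ∀ (x : X) (Λ : Finset ℕ), GreedySet E x Λ →
    ∀ A : Finset ℕ, wsum w A ≤ wsum w Λ →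
      ‖x - ∑ n ∈ Λ, E n x • e n‖ ≤ K * ‖x - ∑ n ∈ A, E n x • e n‖

/-- `w`-democratic with constant `D`. -/
def WDemocratic (w : ℕ → ℝ) (e : ℕ → X) (D : ℝ) : Prop :=
  ∀ A B : Finset ℕ, wsum w A ≤ wsum w B →
    ‖∑ n ∈ A, e n‖ ≤ D * ‖∑ n ∈ B, e n‖

/-- best `m`-term (weighted) approximation error. -/
noncomputable def sigmaW (w : ℕ → ℝ) (e : ℕ → X) (u : ℝ) (x : X) : ℝ :=
  sInf {r | ∃ (A : Finset ℕ) (c : ℕ → ℝ), wsum w A ≤ u ∧ r = ‖x - ∑ n ∈ A, c n • e n‖}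

/-- expansional best (weighted) approximation error. -/
noncomputable def sigmaTildeW (w : ℕ → ℝ) (e : ℕ → X) (E : ℕ → X →L[ℝ] ℝ)
    (u : ℝ) (x : X) : ℝ :=
  sInf {r | ∃ A : Finset ℕ, wsum w A ≤ u ∧ r = ‖x - ∑ n ∈ A, E n x • e n‖}

/-- weighted fundamental function `φ^w`. -/
noncomputable def phiW (w : ℕ → ℝ) (e : ℕ → X) (u : ℝ) : ℝ :=
  sSup {r | ∃ A : Finset ℕ, wsum w A ≤ u ∧ r = ‖∑ n ∈ A, e n‖}

/-- the companion function `φ̂^w`. -/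
noncomputable def phiHatW (w : ℕ → ℝ) (e : ℕ → X) (v : ℝ) : ℝ :=
  sInf {r | ∃ A : Finset ℕ, v < wsum w A ∧ r = ‖∑ n ∈ A, e n‖}

/-- `w`-semi-greedy with constant `K`: some Chebyshev approximant on each greedy set
realizes the bound. -/
def WSemiGreedy (w : ℕ → ℝ) (e : ℕ → X) (E : ℕ → X →L[ℝ] ℝ) (K : ℝ) : Prop :=
  ∀ (x : X) (Λ : Finset ℕ), GreedySet E x Λ →
    ∃ c : ℕ → ℝ, ‖x - ∑ n ∈ Λ, c n • e n‖ ≤ K * sigmaW w e (wsum w Λ) x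

/-- a sequence of signs. -/
def SignVec (ε : ℕ → ℝ) : Prop := ∀ n, ε n = 1 ∨ ε n = -1

/-- `w`-superdemocratic with constant `D`. -/
def WSuperDemocratic (w : ℕ → ℝ) (e : ℕ → X) (D : ℝ) : Prop :=
  ∀ A B : Finset ℕ, wsum w A ≤ wsum w B → ∀ ε δ : ℕ → ℝ, SignVec ε → SignVec δ →
    ‖∑ n ∈ A, ε n • e n‖ ≤ D * ‖∑ n ∈ B, δ n • e n‖

/-- `β` bounds the partial-sum projections (basis constant bound). -/
def BasisConstBound (e : ℕ → X) (E : ℕ → X →L[ℝ] ℝ) (β : ℝ) : Prop :=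
  ∀ (x : X) (N : ℕ), ‖∑ n ∈ Finset.range N, E n x • e n‖ ≤ β * ‖x‖

/-- equivalence to the unit vector basis of `c₀`. -/
def EquivC0 (e : ℕ → X) : Prop :=
  ∃ c C : ℝ, 0 < c ∧ ∀ (A : Finset ℕ) (a : ℕ → ℝ),
    (∀ n ∈ A, c * |a n| ≤ ‖∑ m ∈ A, a m • e m‖) ∧
    (∀ M : ℝ, (∀ n ∈ A, |a n| ≤ M) → ‖∑ n ∈ A, a n • e n‖ ≤ C * M)

/-- conservative with constant `C`. -/
def Conservative (e : ℕ → X) (C : ℝ) : Prop :=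
  ∀ A B : Finset ℕ, A.card ≤ B.card → (∀ a ∈ A, ∀ b ∈ B, a < b) →
    ‖∑ n ∈ A, e n‖ ≤ C * ‖∑ n ∈ B, e n‖

/-- `X` has finite cotype. -/
def FiniteCotype (X : Type*) [NormedAddCommGroup X] [NormedSpace ℝ X] : Prop :=
  ∃ (q C : ℝ), 2 ≤ q ∧ 0 < C ∧ ∀ (n : ℕ) (x : Fin n → X),
    (∑ j, ‖x j‖ ^ q) ^ (1/q) ≤
      C * ((∑ ε : Fin n → Bool,
        ‖∑ j, (if ε j then (1:ℝ) else -1) • x j‖ ^ q) / 2 ^ n) ^ (1/q)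

end Defs

section Proof

variable {X : Type*} [NormedAddCommGroup X] [NormedSpace ℝ X]

namespace Stmt8

variable {e : ℕ → X} {E : ℕ → X →L[ℝ] ℝ}

lemma sign_mul_abs {r : ℝ} (h : r ≠ 0) : Real.sign r * |r| = r := by
  rcases lt_or_gt_of_ne h with h' | h'
  · rw [Real.sign_of_neg h', abs_of_neg h']; ring
  · rw [Real.sign_of_pos h', abs_of_pos h']; ring

lemma abs_sign {r : ℝ} (h : r ≠ 0) : |Real.sign r| = 1 := by
  rcases Real.sign_apply_eq_of_ne_zero r h with h' | h' <;> rw [h'] <;> norm_num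

lemma coeff_sum (hE : ∀ n m, E n (e m) = if n = m then (1:ℝ) else 0)
    (S : Finset ℕ) (c : ℕ → ℝ) (k : ℕ) :
    E k (∑ n ∈ S, c n • e n) = if k ∈ S then c k else 0 := by
  rw [map_sum]
  simp only [map_smul, smul_eq_mul, hE, mul_ite, mul_one, mul_zero]
  exact Finset.sum_ite_eq S k c

lemma proj_sign (hE : ∀ n m, E n (e m) = if n = m then (1:ℝ) else 0)
    {K : ℝ} (hK : QuasiGreedy e E K)
    {Γ S : Finset ℕ} (hS : S ⊆ Γ) {s : ℕ → ℝ} (hs : ∀ n ∈ Γ, s n = 1 ∨ s n = -1) :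
    ‖∑ n ∈ S, s n • e n‖ ≤ K * ‖∑ n ∈ Γ, s n • e n‖ := by
  set v := ∑ n ∈ Γ, s n • e n with hv
  have hcoef : ∀ k, E k v = if k ∈ Γ then s k else 0 := coeff_sum hE Γ s
  have hone : ∀ n ∈ Γ, |E n v| = 1 := by
    intro n hn
    rw [hcoef, if_pos hn]
    rcases hs n hn with h | h <;> rw [h] <;> norm_num
  have hg : GreedySet E v S := by
    intro n hn k hk
    rw [hone n (hS hn)]
    rw [hcoef]
    split_ifs with h
    · rcases hs k h with h' | h' <;> rw [h'] <;> norm_num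
    · norm_num
  have h2 := hK v S hg
  have heq : ∑ n ∈ S, E n v • e n = ∑ n ∈ S, s n • e n :=
    Finset.sum_congr rfl fun n hn => by rw [hcoef, if_pos (hS hn)]
  rwa [heq] at h2

/-- plain sum dominated by a signed sum over a superset -/
lemma plain_le_signed (hE : ∀ n m, E n (e m) = if n = m then (1:ℝ) else 0)
    {K : ℝ} (hK : QuasiGreedy e E K)
    {Γ S : Finset ℕ} (hS : S ⊆ Γ) {s : ℕ → ℝ} (hs : ∀ n ∈ Γ, s n = 1 ∨ s n = -1) :
    ‖∑ n ∈ S, e n‖ ≤ 2 * K * ‖∑ n ∈ Γ, s n • e n‖ := by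
  classical
  set Sp := S.filter (fun n => s n = 1) with hSp
  set Sm := S.filter (fun n => ¬ s n = 1) with hSm
  have hsplit : ∑ n ∈ S, e n = (∑ n ∈ Sp, s n • e n) - ∑ n ∈ Sm, s n • e n := by
    have h1 : ∑ n ∈ Sp, s n • e n = ∑ n ∈ Sp, e n :=
      Finset.sum_congr rfl fun n hn => by rw [(Finset.mem_filter.1 hn).2, one_smul]
    have h2 : ∑ n ∈ Sm, s n • e n = -∑ n ∈ Sm, e n := by
      rw [← Finset.sum_neg_distrib]
      refine Finset.sum_congr rfl fun n hn => ?_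
      have hn' := Finset.mem_filter.1 hn
      rcases hs n (hS hn'.1) with h | h
      · exact absurd h hn'.2
      · rw [h]; simp
    rw [h1, h2, sub_neg_eq_add, hSp, hSm, Finset.sum_filter_add_sum_filter_not]
  rw [hsplit]
  have hp : ‖∑ n ∈ Sp, s n • e n‖ ≤ K * ‖∑ n ∈ Γ, s n • e n‖ :=
    proj_sign hE hK (hSp ▸ (Finset.filter_subset _ S).trans hS) hs
  have hm : ‖∑ n ∈ Sm, s n • e n‖ ≤ K * ‖∑ n ∈ Γ, s n • e n‖ :=
    proj_sign hE hK (hSm ▸ (Finset.filter_subset _ S).trans hS) hs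
  calc ‖(∑ n ∈ Sp, s n • e n) - ∑ n ∈ Sm, s n • e n‖
      ≤ ‖∑ n ∈ Sp, s n • e n‖ + ‖∑ n ∈ Sm, s n • e n‖ := norm_sub_le _ _
    _ ≤ K * ‖∑ n ∈ Γ, s n • e n‖ + K * ‖∑ n ∈ Γ, s n • e n‖ := add_le_add hp hm
    _ = 2 * K * ‖∑ n ∈ Γ, s n • e n‖ := by ring

/-- signed sum dominated by plain sum -/
lemma signed_le_plain (hE : ∀ n m, E n (e m) = if n = m then (1:ℝ) else 0)
    {K : ℝ} (hK : QuasiGreedy e E K)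
    {B : Finset ℕ} {s : ℕ → ℝ} (hs : ∀ n ∈ B, s n = 1 ∨ s n = -1) :
    ‖∑ n ∈ B, s n • e n‖ ≤ 2 * K * ‖∑ n ∈ B, e n‖ := by
  classical
  set Bp := B.filter (fun n => s n = 1) with hBp
  set Bm := B.filter (fun n => ¬ s n = 1) with hBm
  have hone : ∀ n ∈ B, (1:ℝ) = 1 ∨ (1:ℝ) = -1 := fun n _ => Or.inl rfl
  have hsplit : ∑ n ∈ B, s n • e n = (∑ n ∈ Bp, e n) - ∑ n ∈ Bm, e n := by
    have h1 : ∑ n ∈ Bp, s n • e n = ∑ n ∈ Bp, e n :=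
      Finset.sum_congr rfl fun n hn => by rw [(Finset.mem_filter.1 hn).2, one_smul]
    have h2 : ∑ n ∈ Bm, s n • e n = -∑ n ∈ Bm, e n := by
      rw [← Finset.sum_neg_distrib]
      refine Finset.sum_congr rfl fun n hn => ?_
      have hn' := Finset.mem_filter.1 hn
      rcases hs n hn'.1 with h | h
      · exact absurd h hn'.2
      · rw [h]; simp
    rw [← Finset.sum_filter_add_sum_filter_not B (fun n => s n = 1) (fun n => s n • e n),
      ← hBp, ← hBm, h1, h2, ← sub_eq_add_neg]
  rw [hsplit]
  have hp : ‖∑ n ∈ Bp, (1:ℝ) • e n‖ ≤ K * ‖∑ n ∈ B, (1:ℝ) • e n‖ :=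
    proj_sign hE hK (hBp ▸ Finset.filter_subset _ B) hone
  have hm : ‖∑ n ∈ Bm, (1:ℝ) • e n‖ ≤ K * ‖∑ n ∈ B, (1:ℝ) • e n‖ :=
    proj_sign hE hK (hBm ▸ Finset.filter_subset _ B) hone
  simp only [one_smul] at hp hm
  calc ‖(∑ n ∈ Bp, e n) - ∑ n ∈ Bm, e n‖
      ≤ ‖∑ n ∈ Bp, e n‖ + ‖∑ n ∈ Bm, e n‖ := norm_sub_le _ _
    _ ≤ K * ‖∑ n ∈ B, e n‖ + K * ‖∑ n ∈ B, e n‖ := add_le_add hp hm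
    _ = 2 * K * ‖∑ n ∈ B, e n‖ := by ring


lemma abel_aux (hE : ∀ n m, E n (e m) = if n = m then (1:ℝ) else 0)
    {K : ℝ} (hK : QuasiGreedy e E K) (y : X) :
    ∀ N (Γ : Finset ℕ), Γ.card ≤ N → GreedySet E y Γ → (∀ n ∈ Γ, E n y ≠ 0) →
    ∀ r ∈ Γ, (∀ n ∈ Γ, |E r y| ≤ |E n y|) →
    ‖|E r y| • (∑ n ∈ Γ, Real.sign (E n y) • e n) - ∑ n ∈ Γ, E n y • e n‖ ≤ K * ‖y‖ := by
  intro N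
  induction N with
  | zero =>
    intro Γ hc _ _ r hr _
    have : 0 < Γ.card := Finset.card_pos.2 ⟨r, hr⟩
    omega
  | succ N IH =>
    intro Γ hc hg hne r hr hmin
    set Γ' := Γ.erase r with hΓ'
    have hKy : 0 ≤ K * ‖y‖ := by simpa using hK y ∅ (by intro n hn; simp at hn)
    have hsum : ∑ n ∈ Γ', Real.sign (E n y) • e n + Real.sign (E r y) • e r
        = ∑ n ∈ Γ, Real.sign (E n y) • e n := Finset.sum_erase_add _ _ hr
    have hsum2 : ∑ n ∈ Γ', E n y • e n + E r y • e r = ∑ n ∈ Γ, E n y • e n :=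
      Finset.sum_erase_add _ _ hr
    have hkey : |E r y| • (∑ n ∈ Γ, Real.sign (E n y) • e n) - ∑ n ∈ Γ, E n y • e n
        = |E r y| • (∑ n ∈ Γ', Real.sign (E n y) • e n) - ∑ n ∈ Γ', E n y • e n := by
      rw [← hsum, ← hsum2, smul_add]
      have h5 : |E r y| • (Real.sign (E r y) • e r) = E r y • e r := by
        rw [smul_smul, mul_comm, sign_mul_abs (hne r hr)]
      rw [h5]; abel
    rw [hkey]
    rcases Finset.eq_empty_or_nonempty Γ' with h | h
    · simp only [h, Finset.sum_empty, smul_zero, sub_zero, norm_zero]; exact hKy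
    · obtain ⟨r', hr', hmin'⟩ := Finset.exists_min_image Γ' (fun n => |E n y|) h
      have hg' : GreedySet E y Γ' := by
        intro n hn k hk
        by_cases hkr : k = r
        · subst hkr; exact hmin n (Finset.mem_of_mem_erase hn)
        · exact hg n (Finset.mem_of_mem_erase hn) k
            (fun hkΓ => hk (Finset.mem_erase.2 ⟨hkr, hkΓ⟩))
      have hne' : ∀ n ∈ Γ', E n y ≠ 0 := fun n hn => hne n (Finset.mem_of_mem_erase hn)
      have hc' : Γ'.card ≤ N := by
        rw [hΓ', Finset.card_erase_of_mem hr]; omega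
      have IH' := IH Γ' hc' hg' hne' r' hr' hmin'
      have hm'pos : (0:ℝ) < |E r' y| := abs_pos.2 (hne' r' hr')
      have hmm' : |E r y| ≤ |E r' y| := hmin r' (Finset.mem_of_mem_erase hr')
      set θ := |E r y| / |E r' y| with hθ
      have hθ0 : 0 ≤ θ := div_nonneg (abs_nonneg _) hm'pos.le
      have hθ1 : θ ≤ 1 := (div_le_one hm'pos).2 hmm'
      have hmul : θ • (|E r' y| • (∑ n ∈ Γ', Real.sign (E n y) • e n))
          = |E r y| • (∑ n ∈ Γ', Real.sign (E n y) • e n) := by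
        rw [smul_smul, div_mul_cancel₀ _ hm'pos.ne']
      have hP' : ‖∑ n ∈ Γ', E n y • e n‖ ≤ K * ‖y‖ := hK y Γ' hg'
      have hid : |E r y| • (∑ n ∈ Γ', Real.sign (E n y) • e n) - ∑ n ∈ Γ', E n y • e n
          = θ • (|E r' y| • (∑ n ∈ Γ', Real.sign (E n y) • e n) - ∑ n ∈ Γ', E n y • e n)
            + (1 - θ) • (-(∑ n ∈ Γ', E n y • e n)) := by
        rw [smul_sub, hmul]; module
      rw [hid]
      have hb := norm_add_le
        (θ • (|E r' y| • (∑ n ∈ Γ', Real.sign (E n y) • e n) - ∑ n ∈ Γ', E n y • e n))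
        ((1 - θ) • (-(∑ n ∈ Γ', E n y • e n)))
      rw [norm_smul, norm_smul, norm_neg, Real.norm_eq_abs, abs_of_nonneg hθ0,
        Real.norm_eq_abs, abs_of_nonneg (by linarith : (0:ℝ) ≤ 1 - θ)] at hb
      refine hb.trans ?_
      nlinarith [IH', hP', norm_nonneg (∑ n ∈ Γ', E n y • e n)]

lemma abel_bound (hE : ∀ n m, E n (e m) = if n = m then (1:ℝ) else 0)
    {K : ℝ} (hK : QuasiGreedy e E K) (y : X) {Γ : Finset ℕ} (hg : GreedySet E y Γ)
    {t : ℝ} (ht : 0 < t) (hlb : ∀ n ∈ Γ, t ≤ |E n y|) :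
    t * ‖∑ n ∈ Γ, Real.sign (E n y) • e n‖ ≤ 2 * K * ‖y‖ := by
  have hKy : 0 ≤ K * ‖y‖ := by simpa using hK y ∅ (by intro n hn; simp at hn)
  rcases Finset.eq_empty_or_nonempty Γ with h | h
  · simp only [h, Finset.sum_empty, norm_zero, mul_zero]; linarith
  obtain ⟨r, hr, hmin⟩ := Finset.exists_min_image Γ (fun n => |E n y|) h
  have hne : ∀ n ∈ Γ, E n y ≠ 0 := by
    intro n hn h0
    have := hlb n hn
    rw [h0, abs_zero] at this; linarith
  have habel := abel_aux hE hK y Γ.card Γ le_rfl hg hne r hr hmin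
  have h1 : t * ‖∑ n ∈ Γ, Real.sign (E n y) • e n‖
      ≤ |E r y| * ‖∑ n ∈ Γ, Real.sign (E n y) • e n‖ :=
    mul_le_mul_of_nonneg_right (hlb r hr) (norm_nonneg _)
  have h2 : |E r y| * ‖∑ n ∈ Γ, Real.sign (E n y) • e n‖
      = ‖|E r y| • (∑ n ∈ Γ, Real.sign (E n y) • e n)‖ := by
    rw [norm_smul, Real.norm_eq_abs, abs_abs]
  have h3 : ‖|E r y| • (∑ n ∈ Γ, Real.sign (E n y) • e n)‖
      ≤ ‖|E r y| • (∑ n ∈ Γ, Real.sign (E n y) • e n) - ∑ n ∈ Γ, E n y • e n‖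
        + ‖∑ n ∈ Γ, E n y • e n‖ := by
          have := norm_sub_le (|E r y| • (∑ n ∈ Γ, Real.sign (E n y) • e n) - ∑ n ∈ Γ, E n y • e n) (-(∑ n ∈ Γ, E n y • e n))
          simpa [sub_neg_eq_add, sub_add_cancel] using this
  have h4 : ‖∑ n ∈ Γ, E n y • e n‖ ≤ K * ‖y‖ := hK y Γ hg
  calc t * ‖∑ n ∈ Γ, Real.sign (E n y) • e n‖
      ≤ |E r y| * ‖∑ n ∈ Γ, Real.sign (E n y) • e n‖ := h1
    _ = ‖|E r y| • (∑ n ∈ Γ, Real.sign (E n y) • e n)‖ := h2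
    _ ≤ _ + _ := h3
    _ ≤ K * ‖y‖ + K * ‖y‖ := add_le_add habel h4
    _ = 2 * K * ‖y‖ := by ring


lemma convex_signs (e : ℕ → X) :
    ∀ (B : Finset ℕ) (v₀ : X) (b : ℕ → ℝ) (M : ℝ), 0 < M → (∀ n ∈ B, |b n| ≤ M) →
    ∃ ε : ℕ → ℝ, (∀ n, ε n = 1 ∨ ε n = -1) ∧
      ‖v₀ + ∑ n ∈ B, b n • e n‖ ≤ ‖v₀ + ∑ n ∈ B, (M * ε n) • e n‖ := by
  intro B
  induction B using Finset.induction_on with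
  | empty =>
    intro v₀ b M hM _
    exact ⟨fun _ => 1, fun _ => Or.inl rfl, le_refl _⟩
  | @insert n B' hnB IH =>
    intro v₀ b M hM hb
    set v := v₀ + ∑ m ∈ B', b m • e m with hv
    have hbn : |b n| ≤ M := hb n (Finset.mem_insert_self n B')
    -- convexity in the n-th coordinate
    have hstep : ∃ s : ℝ, (s = 1 ∨ s = -1) ∧
        ‖v + b n • e n‖ ≤ ‖v + (M * s) • e n‖ := by
      set θ := (b n + M) / (2 * M) with hθ
      have hθ0 : 0 ≤ θ := by
        apply div_nonneg
        · have := abs_le.1 hbn; linarith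
        · linarith
      have hθ1 : θ ≤ 1 := by
        rw [hθ, div_le_one (by linarith)]
        have := abs_le.1 hbn; linarith
      have hcoef : θ * M + (1 - θ) * (-M) = b n := by
        field_simp [hθ]
        rw [hθ]; field_simp; ring
      have hcomb : v + b n • e n
          = θ • (v + M • e n) + (1 - θ) • (v + (-M) • e n) := by
        have h1 : θ • (v + M • e n) + (1 - θ) • (v + (-M) • e n)
            = (θ + (1 - θ)) • v + (θ * M + (1 - θ) * (-M)) • e n := by module
        rw [h1, hcoef]
        norm_num
      rcases le_total ‖v + (-M) • e n‖ ‖v + M • e n‖ with hc | hc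
      · refine ⟨1, Or.inl rfl, ?_⟩
        rw [hcomb, mul_one]
        calc ‖θ • (v + M • e n) + (1 - θ) • (v + (-M) • e n)‖
            ≤ θ * ‖v + M • e n‖ + (1 - θ) * ‖v + (-M) • e n‖ := by
              refine (norm_add_le _ _).trans ?_
              rw [norm_smul, norm_smul, Real.norm_eq_abs, abs_of_nonneg hθ0,
                Real.norm_eq_abs, abs_of_nonneg (by linarith : (0:ℝ) ≤ 1 - θ)]
          _ ≤ θ * ‖v + M • e n‖ + (1 - θ) * ‖v + M • e n‖ := by nlinarith
          _ = ‖v + M • e n‖ := by ring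
      · refine ⟨-1, Or.inr rfl, ?_⟩
        have : M * (-1) = -M := by ring
        rw [hcomb, this]
        calc ‖θ • (v + M • e n) + (1 - θ) • (v + (-M) • e n)‖
            ≤ θ * ‖v + M • e n‖ + (1 - θ) * ‖v + (-M) • e n‖ := by
              refine (norm_add_le _ _).trans ?_
              rw [norm_smul, norm_smul, Real.norm_eq_abs, abs_of_nonneg hθ0,
                Real.norm_eq_abs, abs_of_nonneg (by linarith : (0:ℝ) ≤ 1 - θ)]
          _ ≤ θ * ‖v + (-M) • e n‖ + (1 - θ) * ‖v + (-M) • e n‖ := by nlinarith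
          _ = ‖v + (-M) • e n‖ := by ring
    obtain ⟨s, hs, hsle⟩ := hstep
    obtain ⟨ε', hε', hle'⟩ := IH (v₀ + (M * s) • e n) b M hM
      (fun m hm => hb m (Finset.mem_insert_of_mem hm))
    refine ⟨fun m => if m = n then s else ε' m, fun m => ?_, ?_⟩
    · by_cases h : m = n
      · simpa [h] using hs
      · simpa [h] using hε' m
    · have e1 : v₀ + ∑ m ∈ insert n B', b m • e m = v + b n • e n := by
        rw [Finset.sum_insert hnB, hv]; abel
      have e2 : v₀ + ∑ m ∈ insert n B', (M * if m = n then s else ε' m) • e m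
          = (v₀ + (M * s) • e n) + ∑ m ∈ B', (M * ε' m) • e m := by
        rw [Finset.sum_insert hnB, if_pos rfl]
        have : ∑ m ∈ B', (M * if m = n then s else ε' m) • e m
            = ∑ m ∈ B', (M * ε' m) • e m := by
          refine Finset.sum_congr rfl fun m hm => ?_
          rw [if_neg (by rintro rfl; exact hnB hm)]
        rw [this]; abel
      rw [e1, e2]
      refine hsle.trans ?_
      have e3 : v + (M * s) • e n = (v₀ + (M * s) • e n) + ∑ m ∈ B', b m • e m := by
        rw [hv]; abel
      rw [e3]
      exact hle'

lemma wsum_sdiff {w : ℕ → ℝ} {A Λ : Finset ℕ} (h : wsum w A ≤ wsum w Λ) :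
    wsum w (A \ Λ) ≤ wsum w (Λ \ A) := by
  have h1 := Finset.sum_inter_add_sum_sdiff A Λ w
  have h2 := Finset.sum_inter_add_sum_sdiff Λ A w
  have h3 : A ∩ Λ = Λ ∩ A := Finset.inter_comm A Λ
  unfold wsum at *
  rw [h3] at h1
  linarith

lemma best_approx [CompleteSpace X] (he_inj : Function.Injective e) (Λ : Finset ℕ) (x : X) :
    ∃ c : ℕ → ℝ, ∀ d : ℕ → ℝ, ‖x - ∑ n ∈ Λ, c n • e n‖ ≤ ‖x - ∑ n ∈ Λ, d n • e n‖ := by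
  classical
  set Sp : Submodule ℝ X := Submodule.span ℝ (↑(Λ.image e) : Set X) with hSp
  have hmemSp : ∀ d : ℕ → ℝ, (∑ n ∈ Λ, d n • e n) ∈ Sp := by
    intro d
    refine Submodule.sum_mem _ fun n hn => Submodule.smul_mem _ _ (Submodule.subset_span ?_)
    simp only [Finset.coe_image, Set.mem_image, Finset.mem_coe]
    exact ⟨n, hn, rfl⟩
  have hC : IsCompact {q : Sp | ‖x - (q : X)‖ ≤ ‖x‖} := by
    apply Metric.isCompact_of_isClosed_isBounded
    · have : Continuous fun q : Sp => ‖x - (q : X)‖ :=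
        (continuous_const.sub continuous_subtype_val).norm
      exact isClosed_le this continuous_const
    · apply Bornology.IsBounded.subset (Metric.isBounded_closedBall (x := (0 : Sp)) (r := 2 * ‖x‖))
      intro q hq
      simp only [Set.mem_setOf_eq] at hq
      simp only [Metric.mem_closedBall, dist_zero_right]
      have h1 : ‖(q : X)‖ ≤ ‖x - (q : X)‖ + ‖x‖ := by
        have := norm_sub_le (x - (q : X)) x
        simpa [sub_sub_cancel_left, norm_neg] using this
      have h2 : ‖q‖ = ‖(q : X)‖ := rfl
      rw [h2]
      linarith
  have hne : ({q : Sp | ‖x - (q : X)‖ ≤ ‖x‖}).Nonempty := by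
    refine ⟨0, ?_⟩
    simp
  obtain ⟨q₀, hq₀mem, hq₀min'⟩ := hC.exists_isMinOn hne
    ((continuous_const.sub continuous_subtype_val).norm.continuousOn)
  have hq₀min := isMinOn_iff.1 hq₀min' 
  have hglobal : ∀ q : Sp, ‖x - (q₀ : X)‖ ≤ ‖x - (q : X)‖ := by
    intro q
    by_cases hq : ‖x - (q : X)‖ ≤ ‖x‖
    · exact hq₀min q hq
    · push_neg at hq
      calc ‖x - (q₀ : X)‖ ≤ ‖x‖ := hq₀mem
        _ ≤ ‖x - (q : X)‖ := hq.le
  have hq₀Sp : (q₀ : X) ∈ Submodule.span ℝ ((Λ.image e : Finset X) : Set X) := q₀.2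
  obtain ⟨f, -, hf⟩ := Submodule.mem_span_finset.1 hq₀Sp
  refine ⟨fun n => f (e n), fun d => ?_⟩
  have hrepr : ∑ n ∈ Λ, f (e n) • e n = (q₀ : X) := by
    rw [← hf, Finset.sum_image]
    intro a _ b _ hab
    exact he_inj hab
  rw [hrepr]
  exact hglobal ⟨_, hmemSp d⟩

lemma sum_extend {U S : Finset ℕ} (e : ℕ → X) (h : S ⊆ U) (f : ℕ → ℝ) :
    ∑ n ∈ S, f n • e n = ∑ n ∈ U, (if n ∈ S then f n else 0) • e n := by
  rw [← Finset.sum_subset h (fun k _ hks => by rw [if_neg hks, zero_smul])]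
  exact Finset.sum_congr rfl fun n hn => by rw [if_pos hn]

end Stmt8

end Proof

open Stmt8

/-- every `w`-almost greedy basis is `w`-semi-greedy with constant
`1 + 3K + 16K³D`, where `K` is a quasi-greedy constant and `D` a `w`-democracy constant. -/
theorem stmt8 {X : Type*} [NormedAddCommGroup X] [NormedSpace ℝ X] [CompleteSpace X]
    (e : ℕ → X) (E : ℕ → X →L[ℝ] ℝ) (w : ℕ → ℝ) (K D : ℝ)
    (hw : ∀ i, 0 < w i) (hb : NormalizedBasis e E)
    (hAG : ∃ K₀ : ℝ, WAlmostGreedy w e E K₀)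
    (hK : QuasiGreedy e E K) (hD : WDemocratic w e D) :
    WSemiGreedy w e E (1 + 3 * K + 16 * K ^ 3 * D) := by
  classical
  obtain ⟨hnorm, hE, hconv⟩ := hb
  clear hAG
  have he_inj : Function.Injective e := by
    intro n m h
    by_contra hne
    have h1 : E n (e n) = 1 := by rw [hE, if_pos rfl]
    have h2 : E n (e m) = 0 := by rw [hE, if_neg hne]
    rw [h, h2] at h1
    norm_num at h1
  have hK1 : 1 ≤ K := by
    have hgs : GreedySet E (e 0) {0} := by
      intro n hn k hk
      simp only [Finset.mem_singleton] at hn hk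
      rw [hn, hE, hE, if_neg hk, if_pos rfl]
      norm_num
    have := hK (e 0) {0} hgs
    rw [Finset.sum_singleton, hE, if_pos rfl, one_smul, hnorm 0, mul_one] at this
    exact this
  have hD1 : 1 ≤ D := by
    have := hD {0} {0} le_rfl
    simp only [Finset.sum_singleton, hnorm] at this
    linarith
  have hK0 : (0:ℝ) ≤ K := by linarith
  have hD0 : (0:ℝ) ≤ D := by linarith
  set Kb := 1 + 3 * K + 16 * K ^ 3 * D with hKb
  have hKb1 : 1 ≤ Kb := by nlinarith [pow_nonneg hK0 3]
  have hKb0 : 0 < Kb := by linarith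
  intro x Λ hΛ
  set u := wsum w Λ with hu
  have hu0 : 0 ≤ u := Finset.sum_nonneg fun i _ => (hw i).le
  set σ := sigmaW w e u x with hσ
  have hσmem : ‖x‖ ∈ {r | ∃ (A : Finset ℕ) (c : ℕ → ℝ),
      wsum w A ≤ u ∧ r = ‖x - ∑ n ∈ A, c n • e n‖} := by
    refine ⟨∅, 0, by simpa [wsum] using hu0, by simp⟩
  have hσ0 : 0 ≤ σ := by
    apply Real.sInf_nonneg
    rintro r ⟨A, c, _, rfl⟩
    positivity
  rcases Finset.eq_empty_or_nonempty Λ with hΛe | hΛne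
  · -- empty greedy set
    subst hΛe
    refine ⟨0, ?_⟩
    have hset : {r | ∃ (A : Finset ℕ) (c : ℕ → ℝ),
        wsum w A ≤ wsum w (∅ : Finset ℕ) ∧ r = ‖x - ∑ n ∈ A, c n • e n‖} = {‖x‖} := by
      ext r
      simp only [Set.mem_setOf_eq, Set.mem_singleton_iff]
      constructor
      · rintro ⟨A, c, hA, rfl⟩
        have hAe : A = ∅ := by
          by_contra hAne
          obtain ⟨a, ha⟩ := Finset.nonempty_iff_ne_empty.2 hAne
          have h1 : w a ≤ wsum w A :=
            Finset.single_le_sum (fun i _ => (hw i).le) ha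
          have h2 : wsum w (∅ : Finset ℕ) = 0 := by simp [wsum]
          rw [h2] at hA
          have := hw a
          linarith
        subst hAe
        simp
      · rintro rfl
        exact ⟨∅, 0, le_rfl, by simp⟩
    show ‖x - ∑ n ∈ (∅ : Finset ℕ), (0:ℝ) • e n‖ ≤ Kb * sigmaW w e (wsum w ∅) x
    rw [sigmaW, hset, csInf_singleton]
    simp only [Finset.sum_empty, sub_zero]
    nlinarith [norm_nonneg x]
  · obtain ⟨n₀, hn₀, hmin⟩ := Finset.exists_min_image Λ (fun n => |E n x|) hΛne
    set t := |E n₀ x| with htd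
    have hinb : ∀ n ∈ Λ, t ≤ |E n x| := hmin
    have hout : ∀ k ∉ Λ, |E k x| ≤ t := fun k hk => hΛ n₀ hn₀ k hk
    rcases (abs_nonneg (E n₀ x)).eq_or_lt with ht0 | ht0
    · -- t = 0 : x is exactly supported on Λ
      have hte : t = 0 := by rw [htd, ← ht0]
      have hzero : ∀ k ∉ Λ, E k x = 0 := by
        intro k hk
        have := hout k hk
        rw [hte] at this
        exact abs_eq_zero.1 (le_antisymm this (abs_nonneg _))
      have hx : x = ∑ n ∈ Λ, E n x • e n := by
        have hev : ∀ N ≥ Λ.sup id + 1,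
            ∑ n ∈ Finset.range N, E n x • e n = ∑ n ∈ Λ, E n x • e n := by
          intro N hN
          refine (Finset.sum_subset ?_ ?_).symm
          · intro n hn
            refine Finset.mem_range.2 ?_
            have : n ≤ Λ.sup id := Finset.le_sup (f := id) hn
            omega
          · intro k _ hkΛ
            rw [hzero k hkΛ, zero_smul]
        have h2 : Filter.Tendsto (fun N => ∑ n ∈ Finset.range N, E n x • e n)
            Filter.atTop (nhds (∑ n ∈ Λ, E n x • e n)) := by
          refine Filter.Tendsto.congr' ?_ tendsto_const_nhds
          filter_upwards [Filter.eventually_ge_atTop (Λ.sup id + 1)] with N hN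
          exact (hev N hN).symm
        exact tendsto_nhds_unique (hconv x) h2
      refine ⟨fun n => E n x, ?_⟩
      rw [← hx]
      simp only [sub_self, norm_zero]
      exact mul_nonneg hKb0.le hσ0
    · -- main case : t > 0
      have htpos : 0 < t := by rw [htd]; exact ht0
      obtain ⟨c, hc⟩ := best_approx he_inj Λ x
      refine ⟨c, ?_⟩
      show ‖x - ∑ n ∈ Λ, c n • e n‖ ≤ Kb * σ
      refine le_of_forall_pos_le_add ?_
      intro δ hδ
      obtain ⟨r, hrmem, hrlt⟩ := Real.lt_sInf_add_pos ⟨‖x‖, hσmem⟩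
        (show 0 < δ / Kb from div_pos hδ hKb0)
      obtain ⟨A, a, hAw, rfl⟩ := hrmem
      set z := ∑ n ∈ A, a n • e n with hz
      set y := x - z with hy
      have hylt : ‖y‖ < σ + δ / Kb := hrlt
      have hEz : ∀ k, E k z = if k ∈ A then a k else 0 := coeff_sum hE A a
      have hEy : ∀ k, E k y = E k x - E k z := fun k => by rw [hy, map_sub]
      have hyx : ∀ k ∉ A, E k y = E k x := by
        intro k hk
        rw [hEy, hEz, if_neg hk, sub_zero]
      have hay : ∀ n ∈ A, a n = E n x - E n y := by
        intro n hn
        rw [hEy, hEz, if_pos hn]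
        ring
      set Γ := (Λ ∪ A).filter (fun n => t ≤ |E n y|) with hΓ
      have hΓsub : Γ ⊆ Λ ∪ A := Finset.filter_subset _ _
      have hΓlb : ∀ n ∈ Γ, t ≤ |E n y| := fun n hn => (Finset.mem_filter.1 hn).2
      have hΓne0 : ∀ n ∈ Γ, E n y ≠ 0 := by
        intro n hn h0
        have := hΓlb n hn
        rw [h0, abs_zero] at this
        linarith
      have hgΓ : GreedySet E y Γ := by
        intro n hn k hk
        have hnt := hΓlb n hn
        by_cases hkU : k ∈ Λ ∪ A
        · have hkt : ¬ t ≤ |E k y| := fun h => hk (Finset.mem_filter.2 ⟨hkU, h⟩)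
          push_neg at hkt
          linarith
        · have hkΛ : k ∉ Λ := fun h => hkU (Finset.mem_union_left _ h)
          have hkA : k ∉ A := fun h => hkU (Finset.mem_union_right _ h)
          rw [hyx k hkA]
          exact (hout k hkΛ).trans hnt
      have hΛA : Λ \ A ⊆ Γ := by
        intro n hn
        obtain ⟨hnΛ, hnA⟩ := Finset.mem_sdiff.1 hn
        refine Finset.mem_filter.2 ⟨Finset.mem_union_left _ hnΛ, ?_⟩
        rw [hyx n hnA]
        exact hinb n hnΛ
      set τ : ℕ → ℝ := fun n => if n ∈ Γ then t * Real.sign (E n y) else E n y with hτ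
      set P := ∑ n ∈ Λ, (E n x - τ n) • e n with hP
      set R := ∑ n ∈ A \ Λ, (E n x - τ n) • e n with hR
      set g := ∑ n ∈ Γ, Real.sign (E n y) • e n with hg
      set PΓ := ∑ n ∈ Γ, E n y • e n with hPΓ
      -- the key algebraic identity
      have hkey : x - P = (y - PΓ + t • g) + R := by
        have hgoal : z + PΓ = P + t • g + R := by
          have htg : t • g = ∑ n ∈ Γ, (t * Real.sign (E n y)) • e n := by
            rw [hg, Finset.smul_sum]
            exact Finset.sum_congr rfl fun n _ => (smul_smul t _ _)
          rw [htg, hz, hPΓ, hP, hR]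
          rw [sum_extend e (Finset.subset_union_right : A ⊆ Λ ∪ A) a,
            sum_extend e hΓsub (fun n => E n y),
            sum_extend e (Finset.subset_union_left : Λ ⊆ Λ ∪ A) (fun n => E n x - τ n),
            sum_extend e hΓsub (fun n => t * Real.sign (E n y)),
            sum_extend e ((Finset.sdiff_subset).trans
              (Finset.subset_union_right : A ⊆ Λ ∪ A)) (fun n => E n x - τ n)]
          rw [← Finset.sum_add_distrib, ← Finset.sum_add_distrib, ← Finset.sum_add_distrib]
          refine Finset.sum_congr rfl fun n hn => ?_
          rw [← add_smul, ← add_smul, ← add_smul]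
          congr 1
          have hnU := Finset.mem_union.1 hn
          simp only [hτ, Finset.mem_sdiff]
          by_cases hnΛ : n ∈ Λ
          · by_cases hnA : n ∈ A
            · by_cases hnΓ : n ∈ Γ
              · simp only [hnΛ, hnA, hnΓ, if_true, ite_true, not_true, and_false, if_false,
                  ite_false, not_true_eq_false]
                rw [hay n hnA]; ring
              · simp only [hnΛ, hnA, hnΓ, if_true, ite_true, not_true, and_false, if_false,
                  ite_false, not_true_eq_false]
                rw [hay n hnA]; ring
            · by_cases hnΓ : n ∈ Γ
              · simp only [hnΛ, hnA, hnΓ, if_true, ite_true, not_true, and_false, if_false,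
                  ite_false, false_and, not_true_eq_false]
                rw [hyx n hnA]; ring
              · simp only [hnΛ, hnA, hnΓ, if_true, ite_true, not_true, and_false, if_false,
                  ite_false, false_and, not_true_eq_false]
                rw [hyx n hnA]; ring
          · by_cases hnA : n ∈ A
            · have hsd : n ∈ A ∧ ¬ n ∈ Λ := ⟨hnA, hnΛ⟩
              by_cases hnΓ : n ∈ Γ
              · simp only [hnΛ, hnA, hnΓ, if_true, ite_true, if_false, ite_false,
                  not_false_iff, and_true, true_and, not_false_eq_true]
                rw [hay n hnA]; ring
              · simp only [hnΛ, hnA, hnΓ, if_true, ite_true, if_false, ite_false,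
                  not_false_iff, and_true, true_and, not_false_eq_true]
                rw [hay n hnA]; ring
            · exact absurd hnU (by tauto)
        have : x - P = (x - z) + (z - P) := by abel
        rw [this, ← hy]
        have h2 : z - P = - PΓ + t • g + R := by
          have := hgoal
          have h3 : z = P + t • g + R - PΓ := by
            rw [← hgoal]; abel
          rw [h3]; abel
        rw [h2]; abel
      -- norm bounds
      have hPΓb : ‖PΓ‖ ≤ K * ‖y‖ := hK y Γ hgΓ
      have hgb : t * ‖g‖ ≤ 2 * K * ‖y‖ := abel_bound hE hK y hgΓ htpos hΓlb
      have hTb : ‖y - PΓ + t • g‖ ≤ (1 + 3 * K) * ‖y‖ := by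
        have h1 : ‖y - PΓ + t • g‖ ≤ ‖y - PΓ‖ + ‖t • g‖ := norm_add_le _ _
        have h2 : ‖y - PΓ‖ ≤ ‖y‖ + ‖PΓ‖ := norm_sub_le _ _
        have h3 : ‖t • g‖ = t * ‖g‖ := by
          rw [norm_smul, Real.norm_eq_abs, abs_of_pos htpos]
        nlinarith [norm_nonneg y]
      -- bound on R
      have hRcoef : ∀ n ∈ A \ Λ, |E n x - τ n| ≤ 2 * t := by
        intro n hn
        obtain ⟨hnA, hnΛ⟩ := Finset.mem_sdiff.1 hn
        have h1 : |E n x| ≤ t := hout n hnΛ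
        have h2 : |τ n| ≤ t := by
          simp only [hτ]
          by_cases hnΓ : n ∈ Γ
          · rw [if_pos hnΓ, abs_mul, abs_of_pos htpos, abs_sign (hΓne0 n hnΓ), mul_one]
          · rw [if_neg hnΓ]
            have : ¬ t ≤ |E n y| := fun h => hnΓ (Finset.mem_filter.2
              ⟨Finset.mem_union_right _ hnA, h⟩)
            linarith
        calc |E n x - τ n| ≤ |E n x| + |τ n| := abs_sub _ _
          _ ≤ 2 * t := by linarith
      obtain ⟨ε, hεsgn, hεle⟩ := convex_signs e (A \ Λ) 0 (fun n => E n x - τ n)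
        (2 * t) (by linarith) hRcoef
      have hRb1 : ‖R‖ ≤ 2 * t * ‖∑ n ∈ A \ Λ, ε n • e n‖ := by
        have h1 : ∑ n ∈ A \ Λ, (2 * t * ε n) • e n
            = (2 * t) • ∑ n ∈ A \ Λ, ε n • e n := by
          rw [Finset.smul_sum]
          exact Finset.sum_congr rfl fun n _ => (smul_smul (2*t) _ _).symm
        have h2 := hεle
        rw [zero_add, zero_add, h1, norm_smul, Real.norm_eq_abs,
          abs_of_pos (by linarith : (0:ℝ) < 2 * t)] at h2
        exact h2
      have hRb2 : ‖∑ n ∈ A \ Λ, ε n • e n‖ ≤ 2 * K * ‖∑ n ∈ A \ Λ, e n‖ :=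
        signed_le_plain hE hK (fun n _ => hεsgn n)
      have hRb3 : ‖∑ n ∈ A \ Λ, e n‖ ≤ D * ‖∑ n ∈ Λ \ A, e n‖ :=
        hD _ _ (wsum_sdiff hAw)
      have hRb4 : ‖∑ n ∈ Λ \ A, e n‖ ≤ 2 * K * ‖g‖ :=
        plain_le_signed hE hK hΛA (fun n hn =>
          Real.sign_apply_eq_of_ne_zero _ (hΓne0 n hn) |>.symm.imp (fun h => h) (fun h => h))
      have hRb : ‖R‖ ≤ 16 * K ^ 3 * D * ‖y‖ := by
        have c1 : ‖R‖ ≤ 2 * t * (2 * K * (D * (2 * K * ‖g‖))) := by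
          refine hRb1.trans ?_
          refine mul_le_mul_of_nonneg_left ?_ (by linarith : (0:ℝ) ≤ 2 * t)
          refine hRb2.trans ?_
          refine mul_le_mul_of_nonneg_left ?_ (by linarith : (0:ℝ) ≤ 2 * K)
          refine hRb3.trans ?_
          exact mul_le_mul_of_nonneg_left hRb4 hD0
        have c2 : 2 * t * (2 * K * (D * (2 * K * ‖g‖))) = 8 * K * K * D * (t * ‖g‖) := by
          ring
        rw [c2] at c1
        have c3 : 8 * K * K * D * (t * ‖g‖) ≤ 8 * K * K * D * (2 * K * ‖y‖) :=
          mul_le_mul_of_nonneg_left hgb (by positivity)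
        calc ‖R‖ ≤ 8 * K * K * D * (2 * K * ‖y‖) := c1.trans c3
          _ = 16 * K ^ 3 * D * ‖y‖ := by ring
      -- put everything together
      have hxP : ‖x - P‖ ≤ Kb * ‖y‖ := by
        rw [hkey]
        calc ‖(y - PΓ + t • g) + R‖ ≤ ‖y - PΓ + t • g‖ + ‖R‖ := norm_add_le _ _
          _ ≤ (1 + 3 * K) * ‖y‖ + 16 * K ^ 3 * D * ‖y‖ := add_le_add hTb hRb
          _ = Kb * ‖y‖ := by rw [hKb]; ring
      have hfinal : ‖x - ∑ n ∈ Λ, c n • e n‖ ≤ Kb * ‖y‖ :=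
        (hc (fun n => E n x - τ n)).trans hxP
      have : Kb * ‖y‖ ≤ Kb * (σ + δ / Kb) :=
        mul_le_mul_of_nonneg_left hylt.le hKb0.le
      calc ‖x - ∑ n ∈ Λ, c n • e n‖ ≤ Kb * ‖y‖ := hfinal
        _ ≤ Kb * (σ + δ / Kb) := this
        _ = Kb * σ + δ := by
            field_simp
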